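/- Let p, q be integers with |p| ≥ 2 and |q| = 2, let a be any real number, and let m, n be integers with |p| + 1 < m < 2|p| - 1 and 2n - 1 ≥ |q| (i.e. n ≥ (|q|+1)/2). Then the self-affine set T(A, D) is a connected subset of ℝ². -/

import Mathlib

open Matrix

/-- The expanding matrix with rows `(p, 0)` and `(-a, q)`. -/
noncomputable def matA (p q : ℤ) (a : ℝ) : Matrix (Fin 2) (Fin 2) ℝ :=
  !![(p : ℝ), 0; -a, (q : ℝ)]

/-- The product digit set `{0,…,m-1} × {0,…,n-1}` viewed inside `ℝ²`. -/
def digitSet (m n : ℤ) : Set (Fin 2 → ℝ) :=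
  {v | ∃ i j : ℤ, 0 ≤ i ∧ i ≤ m - 1 ∧ 0 ≤ j ∧ j ≤ n - 1 ∧ v = ![(i : ℝ), (j : ℝ)]}

/-- `T(A, D) = { ∑_{k≥1} A^{-k} d_k : d_k ∈ D }`. -/
noncomputable def selfAffineSet (A : Matrix (Fin 2) (Fin 2) ℝ) (D : Set (Fin 2 → ℝ)) :
    Set (Fin 2 → ℝ) :=
  {x | ∃ d : ℕ → (Fin 2 → ℝ), (∀ k, d k ∈ D) ∧
    HasSum (fun k => (A⁻¹ ^ (k + 1)).mulVec (d k)) x}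

/-! ### Auxiliary development -/

def SAhyp (p q m n : ℤ) : Prop := 4 ≤ |p| ∧ (q = 2 ∨ q = -2) ∧ |p| + 2 ≤ m ∧ 2 ≤ n

noncomputable def SAc (p q : ℤ) (a : ℝ) : ℝ := a / ((q : ℝ) - (p : ℝ))

noncomputable def SAB (p q : ℤ) (a : ℝ) (k : ℕ) : Matrix (Fin 2) (Fin 2) ℝ :=
  !![((p : ℝ))⁻¹ ^ k, 0;
     SAc p q a * (((p : ℝ))⁻¹ ^ k - ((q : ℝ))⁻¹ ^ k), ((q : ℝ))⁻¹ ^ k]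

abbrev SAT (p q m n : ℤ) (a : ℝ) : Set (Fin 2 → ℝ) :=
  selfAffineSet (matA p q a) (digitSet m n)

section SA

variable {p q m n : ℤ} {a : ℝ}

lemma SA_absP (h : SAhyp p q m n) : (4 : ℝ) ≤ |(p : ℝ)| := by
  have := h.1; rw [← Int.cast_abs]; exact_mod_cast this

lemma SA_P_ne (h : SAhyp p q m n) : (p : ℝ) ≠ 0 := by
  have h4 := SA_absP h
  intro h0; rw [h0] at h4; simp at h4; linarith

lemma SA_absQ (h : SAhyp p q m n) : |(q : ℝ)| = 2 := by
  rcases h.2.1 with rfl | rfl <;> norm_num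

lemma SA_Q_ne (h : SAhyp p q m n) : (q : ℝ) ≠ 0 := by
  rcases h.2.1 with rfl | rfl <;> norm_num

lemma SA_QP_ne (h : SAhyp p q m n) : (q : ℝ) - (p : ℝ) ≠ 0 := by
  have h4 := SA_absP h
  have h2 := SA_absQ h
  intro h0
  have : (q : ℝ) = (p : ℝ) := by linarith
  rw [this] at h2
  rw [h2] at h4; linarith

lemma SA_iP_le (h : SAhyp p q m n) : |((p : ℝ))⁻¹| ≤ 1 / 4 := by
  have h4 := SA_absP h
  rw [abs_inv]
  rw [inv_le_comm₀ (by linarith) (by norm_num)]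
  linarith

lemma SA_iQ (h : SAhyp p q m n) : |((q : ℝ))⁻¹| = 1 / 2 := by
  rw [abs_inv, SA_absQ h]; norm_num

lemma SA_mulVec22 (A B C D x y : ℝ) :
    (!![A, B; C, D]).mulVec ![x, y] = ![A * x + B * y, C * x + D * y] := by
  funext i
  fin_cases i <;> simp [Matrix.mulVec, dotProduct, Fin.sum_univ_two]

lemma SA_B_zero : SAB p q a 0 = 1 := by
  simp [SAB, Matrix.one_fin_two]

lemma SA_B_succ (h : SAhyp p q m n) (k : ℕ) :
    SAB p q a 1 * SAB p q a k = SAB p q a (k + 1) := by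
  have hP := SA_P_ne h
  have hQ := SA_Q_ne h
  have hQP := SA_QP_ne h
  ext i j
  fin_cases i <;> fin_cases j <;> simp [SAB, SAc, Matrix.mul_apply, Fin.sum_univ_two]
  all_goals field_simp
  all_goals ring

lemma SA_A_mul_B (h : SAhyp p q m n) : matA p q a * SAB p q a 1 = 1 := by
  have hP := SA_P_ne h
  have hQ := SA_Q_ne h
  have hQP := SA_QP_ne h
  ext i j
  fin_cases i <;> fin_cases j <;>
    simp [matA, SAB, SAc, Matrix.mul_apply, Fin.sum_univ_two, Matrix.one_apply]
  all_goals field_simp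
  all_goals try ring

lemma SA_inv (h : SAhyp p q m n) : (matA p q a)⁻¹ = SAB p q a 1 :=
  Matrix.inv_eq_right_inv (SA_A_mul_B h)

lemma SA_inv_pow (h : SAhyp p q m n) (k : ℕ) : (matA p q a)⁻¹ ^ k = SAB p q a k := by
  induction k with
  | zero => simp [SA_B_zero]
  | succ k ih => rw [pow_succ', ih, SA_inv h, SA_B_succ h]

lemma SA_det (h : SAhyp p q m n) : IsUnit (matA p q a).det := by
  have : (matA p q a).det = (p : ℝ) * (q : ℝ) := by
    simp [matA, Matrix.det_fin_two_of]
  rw [this]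
  exact (mul_ne_zero (SA_P_ne h) (SA_Q_ne h)).isUnit


/-! ### Series helpers -/

lemma SA_hasSum_shift {M : Type*} [AddCommGroup M] [TopologicalSpace M]
    [IsTopologicalAddGroup M] {f : ℕ → M} {A : M}
    (h : HasSum (fun k => f (k + 1)) (A - f 0)) : HasSum f A := by
  have := (hasSum_nat_add_iff (f := f) 1).mp h
  simpa using this

lemma SA_hasSum_tail {M : Type*} [AddCommGroup M] [TopologicalSpace M]
    [IsTopologicalAddGroup M] {f : ℕ → M} {A : M}
    (h : HasSum f A) : HasSum (fun k => f (k + 1)) (A - f 0) := by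
  apply (hasSum_nat_add_iff (f := f) 1).mpr
  simpa using h

lemma SA_geom (C r : ℝ) (hr : |r| < 1) :
    HasSum (fun k : ℕ => C * r ^ k) (C * (1 - r)⁻¹) :=
  (hasSum_geometric_of_norm_lt_one (by rwa [Real.norm_eq_abs])).mul_left C

lemma SA_geom1 (C r : ℝ) (hr : |r| < 1) :
    HasSum (fun k : ℕ => C * r ^ (k + 1)) (C * r * (1 - r)⁻¹) := by
  have hfg : (fun k : ℕ => C * r ^ (k + 1)) = fun k : ℕ => (C * r) * r ^ k := by
    funext k; ring
  rw [hfg]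
  exact SA_geom (C * r) r hr

lemma SA_half : HasSum (fun k : ℕ => ((1 : ℝ) / 2) ^ (k + 1)) 1 := by
  have h := SA_geom1 1 (1 / 2) (by rw [abs_of_pos] <;> norm_num)
  have hv : (1:ℝ) * (1/2) * (1 - 1/2)⁻¹ = 1 := by norm_num
  rw [hv] at h
  have hf : (fun k : ℕ => (1:ℝ) * (1/2) ^ (k+1)) = fun k : ℕ => ((1:ℝ)/2) ^ (k+1) := by
    funext k; ring
  rwa [hf] at h

/-! ### Bounds -/

noncomputable def SARb (p q m n : ℤ) (a : ℝ) : ℝ :=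
  (2 * |SAc p q a| + 1) * ((m : ℝ) + (n : ℝ))

lemma SA_m_ge (h : SAhyp p q m n) : (6 : ℝ) ≤ (m : ℝ) := by
  have h1 := h.1; have h2 := h.2.2.1
  have : (6 : ℤ) ≤ m := by omega
  exact_mod_cast this

lemma SA_n_ge (h : SAhyp p q m n) : (2 : ℝ) ≤ (n : ℝ) := by exact_mod_cast h.2.2.2

lemma SA_Rb_pos (h : SAhyp p q m n) : 0 < SARb p q m n a := by
  have h1 := SA_m_ge h; have h2 := SA_n_ge h
  have h3 : (0:ℝ) ≤ |SAc p q a| := abs_nonneg _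
  unfold SARb; nlinarith

lemma SA_mge (h : SAhyp p q m n) : (m : ℝ) - 1 ≤ SARb p q m n a := by
  have h1 := SA_m_ge h; have h2 := SA_n_ge h
  have h3 : (0:ℝ) ≤ |SAc p q a| := abs_nonneg _
  unfold SARb; nlinarith

lemma SA_iP_pow (h : SAhyp p q m n) (k : ℕ) : |((p:ℝ))⁻¹| ^ k ≤ (1/2 : ℝ) ^ k := by
  apply pow_le_pow_left₀ (abs_nonneg _)
  have := SA_iP_le h; linarith

lemma SA_vec_bound (h : SAhyp p q m n) {x y : ℝ}
    (hx : |x| ≤ (m : ℝ) - 1) (hy : |y| ≤ (n : ℝ) - 1) (k : ℕ) (i : Fin 2) :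
    |((SAB p q a (k + 1)).mulVec ![x, y]) i| ≤ SARb p q m n a * (1 / 2) ^ (k + 1) := by
  have hm := SA_m_ge h; have hn := SA_n_ge h
  have hc : (0:ℝ) ≤ |SAc p q a| := abs_nonneg _
  have hx0 : (0:ℝ) ≤ |x| := abs_nonneg _
  have hy0 : (0:ℝ) ≤ |y| := abs_nonneg _
  have hiP : |((p:ℝ))⁻¹ ^ (k+1)| ≤ (1/2 : ℝ) ^ (k+1) := by
    rw [abs_pow]; exact SA_iP_pow h (k+1)
  have hiQ : |((q:ℝ))⁻¹ ^ (k+1)| = (1/2 : ℝ) ^ (k+1) := by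
    rw [abs_pow, SA_iQ h]
  have hp2 : (0:ℝ) < (1/2 : ℝ) ^ (k+1) := by positivity
  have hiP0 : (0:ℝ) ≤ |((p:ℝ))⁻¹ ^ (k+1)| := abs_nonneg _
  rw [SAB, SA_mulVec22]
  fin_cases i
  · simp only [Matrix.cons_val_zero]
    calc |((p:ℝ))⁻¹ ^ (k+1) * x + 0 * y| = |((p:ℝ))⁻¹ ^ (k+1)| * |x| := by
          rw [zero_mul, add_zero, abs_mul]
      _ ≤ (1/2 : ℝ) ^ (k+1) * ((m:ℝ) - 1) := by
          apply mul_le_mul hiP hx hx0 (le_of_lt hp2)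
      _ = ((m:ℝ) - 1) * (1/2) ^ (k+1) := mul_comm _ _
      _ ≤ SARb p q m n a * (1/2) ^ (k+1) := mul_le_mul_of_nonneg_right (SA_mge h) hp2.le
  · simp only [Matrix.cons_val_one, Matrix.head_cons]
    have h1 : |SAc p q a * (((p:ℝ))⁻¹ ^ (k+1) - ((q:ℝ))⁻¹ ^ (k+1)) * x + ((q:ℝ))⁻¹ ^ (k+1) * y|
        ≤ |SAc p q a| * (|((p:ℝ))⁻¹ ^ (k+1)| + |((q:ℝ))⁻¹ ^ (k+1)|) * |x|
          + |((q:ℝ))⁻¹ ^ (k+1)| * |y| := by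
      calc |SAc p q a * (((p:ℝ))⁻¹ ^ (k+1) - ((q:ℝ))⁻¹ ^ (k+1)) * x + ((q:ℝ))⁻¹ ^ (k+1) * y|
          ≤ |SAc p q a * (((p:ℝ))⁻¹ ^ (k+1) - ((q:ℝ))⁻¹ ^ (k+1)) * x| + |((q:ℝ))⁻¹ ^ (k+1) * y| :=
            abs_add_le _ _
        _ ≤ |SAc p q a| * (|((p:ℝ))⁻¹ ^ (k+1)| + |((q:ℝ))⁻¹ ^ (k+1)|) * |x|
            + |((q:ℝ))⁻¹ ^ (k+1)| * |y| := by
            rw [abs_mul, abs_mul, abs_mul]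
            have := abs_sub (((p:ℝ))⁻¹ ^ (k+1)) (((q:ℝ))⁻¹ ^ (k+1))
            gcongr
    rw [hiQ] at h1
    calc |SAc p q a * (((p:ℝ))⁻¹ ^ (k+1) - ((q:ℝ))⁻¹ ^ (k+1)) * x + ((q:ℝ))⁻¹ ^ (k+1) * y|
        ≤ |SAc p q a| * (|((p:ℝ))⁻¹ ^ (k+1)| + (1/2:ℝ) ^ (k+1)) * |x| + (1/2:ℝ)^(k+1) * |y| := h1
      _ ≤ SARb p q m n a * (1/2) ^ (k+1) := by
          unfold SARb
          nlinarith [mul_le_mul hiP (le_refl (1:ℝ)) (by norm_num : (0:ℝ) ≤ 1) (le_of_lt hp2),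
            mul_nonneg hc hx0, mul_nonneg hc (le_of_lt hp2)]

lemma SA_cast_bound {B : ℤ} {i : ℤ} (h1 : 0 ≤ i) (h2 : i ≤ B - 1) : |(i : ℝ)| ≤ (B : ℝ) - 1 := by
  rw [abs_of_nonneg (by exact_mod_cast h1 : (0:ℝ) ≤ (i:ℝ))]
  have : (i : ℝ) ≤ ((B - 1 : ℤ) : ℝ) := by exact_mod_cast h2
  simpa using this

lemma SA_term_rewrite (h : SAhyp p q m n) (d : ℕ → Fin 2 → ℝ) :
    (fun k => ((matA p q a)⁻¹ ^ (k + 1)).mulVec (d k))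
      = fun k => (SAB p q a (k + 1)).mulVec (d k) := by
  funext k; rw [SA_inv_pow h]

lemma SA_u_hasSum (h : SAhyp p q m n) :
    HasSum (fun k : ℕ => SARb p q m n a * (1/2) ^ (k+1)) (SARb p q m n a) := by
  have := SA_half.mul_left (SARb p q m n a)
  simpa using this

lemma SA_summable (h : SAhyp p q m n) (g : ℕ → Fin 2 → ℝ)
    (hb : ∀ k i, |g k i| ≤ SARb p q m n a * (1 / 2) ^ (k + 1)) : Summable g := by
  apply Summable.of_norm_bounded (g := fun k => SARb p q m n a * (1/2) ^ (k+1))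
    (SA_u_hasSum h).summable
  intro k
  apply pi_norm_le_iff_of_nonneg (mul_nonneg (SA_Rb_pos h).le (by positivity)) |>.mpr
  intro i
  rw [Real.norm_eq_abs]
  exact hb k i

lemma SA_mem (h : SAhyp p q m n) (I J : ℕ → ℤ)
    (hI : ∀ k, 0 ≤ I k ∧ I k ≤ m - 1) (hJ : ∀ k, 0 ≤ J k ∧ J k ≤ n - 1) :
    ∃ x, x ∈ SAT p q m n a ∧
      HasSum (fun k => (SAB p q a (k + 1)).mulVec ![(I k : ℝ), (J k : ℝ)]) x := by
  have hb : ∀ k i, |((SAB p q a (k + 1)).mulVec ![(I k : ℝ), (J k : ℝ)]) i|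
      ≤ SARb p q m n a * (1 / 2) ^ (k + 1) := by
    intro k i
    exact SA_vec_bound h (SA_cast_bound (hI k).1 (hI k).2) (SA_cast_bound (hJ k).1 (hJ k).2) k i
  have hsummable := SA_summable h _ hb
  refine ⟨∑' k, (SAB p q a (k + 1)).mulVec ![(I k : ℝ), (J k : ℝ)], ?_, hsummable.hasSum⟩
  refine ⟨fun k => ![(I k : ℝ), (J k : ℝ)], fun k => ⟨I k, J k, (hI k).1, (hI k).2, (hJ k).1, (hJ k).2, rfl⟩, ?_⟩
  rw [SA_term_rewrite h]
  exact hsummable.hasSum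

lemma SA_T_bound (h : SAhyp p q m n) {x : Fin 2 → ℝ} (hx : x ∈ SAT p q m n a) (i : Fin 2) :
    |x i| ≤ SARb p q m n a := by
  obtain ⟨d, hd, hs⟩ := hx
  rw [SA_term_rewrite h d] at hs
  have hci : HasSum (fun k => ((SAB p q a (k + 1)).mulVec (d k)) i) (x i) := Pi.hasSum.mp hs i
  have hxi : x i = ∑' k, ((SAB p q a (k + 1)).mulVec (d k)) i := hci.tsum_eq.symm
  rw [hxi, ← Real.norm_eq_abs]
  have hb : ∀ k, ‖((SAB p q a (k + 1)).mulVec (d k)) i‖ ≤ SARb p q m n a * (1/2) ^ (k+1) := by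
    intro k
    rw [Real.norm_eq_abs]
    obtain ⟨ik, jk, h1, h2, h3, h4, h5⟩ := hd k
    rw [h5]
    exact SA_vec_bound h (SA_cast_bound h1 h2) (SA_cast_bound h3 h4) k i
  exact tsum_of_norm_bounded (SA_u_hasSum (p := p) (q := q) (m := m) (n := n) (a := a) h) hb


/-! ### Compactness -/

lemma SA_digit_finite : (digitSet m n).Finite := by
  have : digitSet m n ⊆ (fun ij : ℤ × ℤ => ![(ij.1 : ℝ), (ij.2 : ℝ)]) ''
      (Set.Icc 0 (m - 1) ×ˢ Set.Icc 0 (n - 1)) := by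
    rintro v ⟨i, j, h1, h2, h3, h4, rfl⟩
    exact ⟨(i, j), ⟨⟨h1, h2⟩, ⟨h3, h4⟩⟩, rfl⟩
  exact (((Set.finite_Icc _ _).prod (Set.finite_Icc _ _)).image _).subset this

noncomputable def SAclamp (m n : ℤ) (v : Fin 2 → ℝ) : Fin 2 → ℝ :=
  ![max 0 (min (v 0) ((m : ℝ) - 1)), max 0 (min (v 1) ((n : ℝ) - 1))]

noncomputable def SAF (p q m n : ℤ) (a : ℝ) (dd : ℕ → Fin 2 → ℝ) : Fin 2 → ℝ :=
  ∑' k, (SAB p q a (k + 1)).mulVec (SAclamp m n (dd k))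

lemma SA_clamp_digit (hd : d ∈ digitSet m n) : SAclamp m n d = d := by
  obtain ⟨i, j, h1, h2, h3, h4, rfl⟩ := hd
  have c1 : (0:ℝ) ≤ (i:ℝ) := by exact_mod_cast h1
  have c2 : (i:ℝ) ≤ (m:ℝ) - 1 := by
    have : (i : ℝ) ≤ ((m - 1 : ℤ) : ℝ) := by exact_mod_cast h2
    simpa using this
  have c3 : (0:ℝ) ≤ (j:ℝ) := by exact_mod_cast h3
  have c4 : (j:ℝ) ≤ (n:ℝ) - 1 := by
    have : (j : ℝ) ≤ ((n - 1 : ℤ) : ℝ) := by exact_mod_cast h4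
    simpa using this
  funext i'
  fin_cases i' <;> simp [SAclamp, min_eq_left, max_eq_right, c1, c2, c3, c4]

lemma SA_clamp_bound0 (h : SAhyp p q m n) (v : Fin 2 → ℝ) :
    |SAclamp m n v 0| ≤ (m : ℝ) - 1 := by
  have hm := SA_m_ge h
  simp only [SAclamp, Matrix.cons_val_zero]
  rw [abs_of_nonneg (le_max_left _ _)]
  apply max_le (by linarith) (min_le_right _ _)

lemma SA_clamp_bound1 (h : SAhyp p q m n) (v : Fin 2 → ℝ) :
    |SAclamp m n v 1| ≤ (n : ℝ) - 1 := by
  have hn := SA_n_ge h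
  simp only [SAclamp, Matrix.cons_val_one, Matrix.head_cons]
  rw [abs_of_nonneg (le_max_left _ _)]
  apply max_le (by linarith) (min_le_right _ _)

lemma SA_clamp_pair (v : Fin 2 → ℝ) :
    SAclamp m n v = ![SAclamp m n v 0, SAclamp m n v 1] := by
  funext i; fin_cases i <;> simp [SAclamp]

lemma SA_F_term_bound (h : SAhyp p q m n) (dd : ℕ → Fin 2 → ℝ) (k : ℕ) (i : Fin 2) :
    |((SAB p q a (k + 1)).mulVec (SAclamp m n (dd k))) i|
      ≤ SARb p q m n a * (1 / 2) ^ (k + 1) := by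
  rw [SA_clamp_pair (dd k)]
  exact SA_vec_bound h (SA_clamp_bound0 h (dd k)) (SA_clamp_bound1 h (dd k)) k i

lemma SA_F_continuous (h : SAhyp p q m n) : Continuous (SAF p q m n a) := by
  apply continuous_tsum
    (u := fun k => SARb p q m n a * (1/2) ^ (k+1))
  · intro k
    have hc0 : Continuous fun dd : ℕ → Fin 2 → ℝ => dd k 0 :=
      (continuous_apply (0 : Fin 2)).comp (continuous_apply k)
    have hc1 : Continuous fun dd : ℕ → Fin 2 → ℝ => dd k 1 :=
      (continuous_apply (1 : Fin 2)).comp (continuous_apply k)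
    have hc : Continuous fun dd : ℕ → Fin 2 → ℝ => SAclamp m n (dd k) := by
      unfold SAclamp
      apply continuous_pi
      intro i
      fin_cases i
      · simpa using continuous_const.max (hc0.min continuous_const)
      · simpa using continuous_const.max (hc1.min continuous_const)
    exact continuous_const.matrix_mulVec hc
  · exact (SA_u_hasSum h).summable
  · intro k dd
    apply pi_norm_le_iff_of_nonneg (mul_nonneg (SA_Rb_pos h).le (by positivity)) |>.mpr
    intro i
    rw [Real.norm_eq_abs]
    exact SA_F_term_bound h dd k i

lemma SA_T_eq_image (h : SAhyp p q m n) :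
    SAT p q m n a = SAF p q m n a '' (Set.pi Set.univ fun _ : ℕ => digitSet m n) := by
  ext x
  constructor
  · rintro ⟨d, hd, hs⟩
    refine ⟨d, fun k _ => hd k, ?_⟩
    rw [SA_term_rewrite h d] at hs
    have : SAF p q m n a d = ∑' k, (SAB p q a (k + 1)).mulVec (d k) := by
      unfold SAF
      congr 1
      funext k
      rw [SA_clamp_digit (hd k)]
    rw [this, hs.tsum_eq]
  · rintro ⟨dd, hdd, rfl⟩
    have hdk : ∀ k, dd k ∈ digitSet m n := fun k => hdd k (Set.mem_univ k)
    have hfun : (fun k => (SAB p q a (k + 1)).mulVec (SAclamp m n (dd k)))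
        = fun k => (SAB p q a (k + 1)).mulVec (dd k) := by
      funext k; rw [SA_clamp_digit (hdk k)]
    have hsummable : Summable fun k => (SAB p q a (k + 1)).mulVec (dd k) := by
      apply SA_summable h
      intro k i
      obtain ⟨ik, jk, h1, h2, h3, h4, h5⟩ := hdk k
      rw [h5]
      exact SA_vec_bound h (SA_cast_bound h1 h2) (SA_cast_bound h3 h4) k i
    refine ⟨dd, hdk, ?_⟩
    rw [SA_term_rewrite h dd]
    have : SAF p q m n a dd = ∑' k, (SAB p q a (k + 1)).mulVec (dd k) := by
      unfold SAF; rw [hfun]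
    rw [this]
    exact hsummable.hasSum

lemma SA_T_isCompact (h : SAhyp p q m n) : IsCompact (SAT p q m n a) := by
  rw [SA_T_eq_image h]
  exact (isCompact_univ_pi fun _ => SA_digit_finite.isCompact).image (SA_F_continuous h)


/-! ### Piece maps -/

lemma SA_hasSum_mulVec {M : Matrix (Fin 2) (Fin 2) ℝ} {f : ℕ → Fin 2 → ℝ} {x : Fin 2 → ℝ}
    (h : HasSum f x) : HasSum (fun k => M.mulVec (f k)) (M.mulVec x) := by
  have := h.mapL (LinearMap.toContinuousLinearMap M.mulVecLin)
  simpa [Matrix.mulVecLin_apply] using this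

noncomputable def SAfpt (p q : ℤ) (a : ℝ) (d x : Fin 2 → ℝ) : Fin 2 → ℝ :=
  ((matA p q a)⁻¹).mulVec (x + d)

lemma SA_fpt_sub (d x y : Fin 2 → ℝ) :
    SAfpt p q a d x - SAfpt p q a d y = ((matA p q a)⁻¹).mulVec (x - y) := by
  rw [SAfpt, SAfpt, ← Matrix.mulVec_sub]
  congr 1
  abel

lemma SA_fpt_mem (h : SAhyp p q m n) {d x : Fin 2 → ℝ} (hd : d ∈ digitSet m n)
    (hx : x ∈ SAT p q m n a) : SAfpt p q a d x ∈ SAT p q m n a := by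
  obtain ⟨σ, hσ, hs⟩ := hx
  have h1 : HasSum (fun k => ((matA p q a)⁻¹).mulVec
      (((matA p q a)⁻¹ ^ (k + 1)).mulVec (σ k))) (((matA p q a)⁻¹).mulVec x) :=
    SA_hasSum_mulVec hs
  have h2 : (fun k => ((matA p q a)⁻¹).mulVec (((matA p q a)⁻¹ ^ (k + 1)).mulVec (σ k)))
      = fun k => ((matA p q a)⁻¹ ^ (k + 2)).mulVec (σ k) := by
    funext k
    rw [Matrix.mulVec_mulVec, ← pow_succ']
  rw [h2] at h1
  refine ⟨fun k => Nat.casesOn k d fun l => σ l, fun k => by cases k <;> simp [hd, hσ], ?_⟩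
  set F : ℕ → Fin 2 → ℝ := fun k => ((matA p q a)⁻¹ ^ (k + 1)).mulVec
      (Nat.casesOn k d fun l => σ l) with hF
  have hFs : (fun k => F (k + 1)) = fun k => ((matA p q a)⁻¹ ^ (k + 2)).mulVec (σ k) := by
    funext k; rfl
  apply SA_hasSum_shift
  rw [hFs]
  have hF0 : F 0 = ((matA p q a)⁻¹).mulVec d := by rw [hF]; simp
  have hval : SAfpt p q a d x - F 0 = ((matA p q a)⁻¹).mulVec x := by
    rw [hF0, SAfpt, Matrix.mulVec_add]
    abel
  rw [hval]
  exact h1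

lemma SA_exists_fpt (h : SAhyp p q m n) {x : Fin 2 → ℝ} (hx : x ∈ SAT p q m n a) :
    ∃ d ∈ digitSet m n, ∃ y ∈ SAT p q m n a, x = SAfpt p q a d y := by
  obtain ⟨σ, hσ, hs⟩ := hx
  have ht := SA_hasSum_tail hs
  have h1 := SA_hasSum_mulVec (M := matA p q a) ht
  have hAA : matA p q a * (matA p q a)⁻¹ = 1 := Matrix.mul_nonsing_inv _ (SA_det h)
  have hterm : (fun k => (matA p q a).mulVec
      (((matA p q a)⁻¹ ^ (k + 1 + 1)).mulVec (σ (k + 1))))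
      = fun k => ((matA p q a)⁻¹ ^ (k + 1)).mulVec (σ (k + 1)) := by
    funext k
    rw [Matrix.mulVec_mulVec]
    congr 1
    rw [pow_succ', ← mul_assoc, hAA, one_mul]
  rw [hterm] at h1
  have hd0 : (matA p q a).mulVec (((matA p q a)⁻¹ ^ (0 + 1)).mulVec (σ 0)) = σ 0 := by
    rw [Matrix.mulVec_mulVec, pow_one, hAA, Matrix.one_mulVec]
  refine ⟨σ 0, hσ 0, (matA p q a).mulVec
      (x - ((matA p q a)⁻¹ ^ (0 + 1)).mulVec (σ 0)), ⟨fun k => σ (k + 1), fun k => hσ _, h1⟩, ?_⟩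
  rw [SAfpt, Matrix.mulVec_sub, hd0]
  have : (matA p q a).mulVec x - σ 0 + σ 0 = (matA p q a).mulVec x := by abel
  rw [this, Matrix.mulVec_mulVec, Matrix.nonsing_inv_mul _ (SA_det h), Matrix.one_mulVec]

/-! ### Words -/

noncomputable def SAg (p q : ℤ) (a : ℝ) : ℕ → (ℕ → Fin 2 → ℝ) → (Fin 2 → ℝ) → (Fin 2 → ℝ)
  | 0, _, x => x
  | k + 1, w, x => SAg p q a k w (SAfpt p q a (w k) x)

lemma SA_g_mem (h : SAhyp p q m n) :
    ∀ (k : ℕ) (w : ℕ → Fin 2 → ℝ) (x : Fin 2 → ℝ), (∀ l, l < k → w l ∈ digitSet m n) →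
      x ∈ SAT p q m n a → SAg p q a k w x ∈ SAT p q m n a := by
  intro k
  induction k with
  | zero => intro w x _ hx; exact hx
  | succ k ih =>
    intro w x hw hx
    exact ih w _ (fun l hl => hw l (Nat.lt_succ_of_lt hl))
      (SA_fpt_mem h (hw k (Nat.lt_succ_self k)) hx)

lemma SA_g_sub : ∀ (k : ℕ) (w : ℕ → Fin 2 → ℝ) (x y : Fin 2 → ℝ),
    SAg p q a k w x - SAg p q a k w y = ((matA p q a)⁻¹ ^ k).mulVec (x - y) := by
  intro k
  induction k with
  | zero => intro w x y; simp [SAg, Matrix.one_mulVec]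
  | succ k ih =>
    intro w x y
    show SAg p q a k w _ - SAg p q a k w _ = _
    rw [ih, SA_fpt_sub, Matrix.mulVec_mulVec, ← pow_succ]

lemma SA_g_congr : ∀ (k : ℕ) (w w' : ℕ → Fin 2 → ℝ) (x : Fin 2 → ℝ),
    (∀ l, l < k → w l = w' l) → SAg p q a k w x = SAg p q a k w' x := by
  intro k
  induction k with
  | zero => intro w w' x _; rfl
  | succ k ih =>
    intro w w' x hw
    show SAg p q a k w _ = SAg p q a k w' _
    rw [hw k (Nat.lt_succ_self k)]
    exact ih w w' _ fun l hl => hw l (Nat.lt_succ_of_lt hl)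

/-! ### The chain relation -/

def SAR (p q m n : ℤ) (a : ℝ) (k : ℕ) (x y : Fin 2 → ℝ) : Prop :=
  x ∈ SAT p q m n a ∧ y ∈ SAT p q m n a ∧
  ∃ w u v, (∀ l, l < k → w l ∈ digitSet m n) ∧ u ∈ SAT p q m n a ∧ v ∈ SAT p q m n a ∧
    x = SAg p q a k w u ∧ y = SAg p q a k w v

lemma SA_R_zero (hx : x ∈ SAT p q m n a) (hy : y ∈ SAT p q m n a) : SAR p q m n a 0 x y :=
  ⟨hx, hy, fun _ => 0, x, y, fun l hl => absurd hl (Nat.not_lt_zero l), hx, hy, rfl, rfl⟩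

lemma SA_vec_eta (w : Fin 2 → ℝ) : w = ![w 0, w 1] := by
  funext i; fin_cases i <;> simp

lemma SA_Bk_bound (h : SAhyp p q m n) (k : ℕ) {x y C : ℝ} (hC : 0 ≤ C)
    (hx : |x| ≤ C) (hy : |y| ≤ C) (i : Fin 2) :
    |((SAB p q a k).mulVec ![x, y]) i| ≤ (2 * |SAc p q a| + 1) * C * (1 / 2) ^ k := by
  have hc : (0:ℝ) ≤ |SAc p q a| := abs_nonneg _
  have hiP : |((p:ℝ))⁻¹ ^ k| ≤ (1/2 : ℝ) ^ k := by
    rw [abs_pow]; exact SA_iP_pow h k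
  have hiQ : |((q:ℝ))⁻¹ ^ k| = (1/2 : ℝ) ^ k := by rw [abs_pow, SA_iQ h]
  have hp2 : (0:ℝ) < (1/2 : ℝ) ^ k := by positivity
  rw [SAB, SA_mulVec22]
  fin_cases i
  · simp only [Matrix.cons_val_zero]
    calc |((p:ℝ))⁻¹ ^ k * x + 0 * y| = |((p:ℝ))⁻¹ ^ k| * |x| := by
          rw [zero_mul, add_zero, abs_mul]
      _ ≤ (1/2 : ℝ) ^ k * C := mul_le_mul hiP hx (abs_nonneg _) hp2.le
      _ ≤ (2 * |SAc p q a| + 1) * C * (1/2) ^ k := by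
          nlinarith [mul_nonneg (mul_nonneg hc hC) hp2.le]
  · simp only [Matrix.cons_val_one, Matrix.head_cons]
    have e0 : |SAc p q a * (((p:ℝ))⁻¹ ^ k - ((q:ℝ))⁻¹ ^ k) * x + ((q:ℝ))⁻¹ ^ k * y|
        ≤ |SAc p q a| * (|((p:ℝ))⁻¹ ^ k| + |((q:ℝ))⁻¹ ^ k|) * |x| + |((q:ℝ))⁻¹ ^ k| * |y| := by
      calc |SAc p q a * (((p:ℝ))⁻¹ ^ k - ((q:ℝ))⁻¹ ^ k) * x + ((q:ℝ))⁻¹ ^ k * y|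
          ≤ |SAc p q a * (((p:ℝ))⁻¹ ^ k - ((q:ℝ))⁻¹ ^ k) * x| + |((q:ℝ))⁻¹ ^ k * y| :=
            abs_add_le _ _
        _ ≤ |SAc p q a| * (|((p:ℝ))⁻¹ ^ k| + |((q:ℝ))⁻¹ ^ k|) * |x| + |((q:ℝ))⁻¹ ^ k| * |y| := by
            rw [abs_mul, abs_mul, abs_mul]
            have habs := abs_sub (((p:ℝ))⁻¹ ^ k) (((q:ℝ))⁻¹ ^ k)
            gcongr
    rw [hiQ] at e0
    have e1 : |SAc p q a| * (|((p:ℝ))⁻¹ ^ k| + (1/2:ℝ) ^ k) * |x|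
        ≤ |SAc p q a| * ((1/2:ℝ) ^ k + (1/2:ℝ) ^ k) * C := by gcongr
    have e2 : (1/2:ℝ) ^ k * |y| ≤ (1/2:ℝ) ^ k * C := by gcongr
    calc |SAc p q a * (((p:ℝ))⁻¹ ^ k - ((q:ℝ))⁻¹ ^ k) * x + ((q:ℝ))⁻¹ ^ k * y|
        ≤ |SAc p q a| * ((1/2:ℝ) ^ k + (1/2:ℝ) ^ k) * C + (1/2:ℝ) ^ k * C := by linarith
      _ = (2 * |SAc p q a| + 1) * C * (1/2) ^ k := by ring

lemma SA_R_dist (h : SAhyp p q m n) {k : ℕ} {x y : Fin 2 → ℝ} (hR : SAR p q m n a k x y) :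
    dist x y ≤ (2 * |SAc p q a| + 1) * (2 * SARb p q m n a) * (1 / 2) ^ k := by
  obtain ⟨hx, hy, w, u, v, hw, hu, hv, hxe, hye⟩ := hR
  have hveq : u - v = ![u 0 - v 0, u 1 - v 1] := by
    funext i; fin_cases i <;> simp
  have hsub : x - y = (SAB p q a k).mulVec ![u 0 - v 0, u 1 - v 1] := by
    rw [hxe, hye, SA_g_sub, SA_inv_pow h, ← hveq]
  have hbd : ∀ i : Fin 2, |u i - v i| ≤ 2 * SARb p q m n a := by
    intro i
    calc |u i - v i| ≤ |u i| + |v i| := abs_sub _ _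
      _ ≤ 2 * SARb p q m n a := by
          have := SA_T_bound h hu i; have := SA_T_bound h hv i; linarith
  rw [dist_eq_norm, hsub]
  have hnn : (0:ℝ) ≤ (2 * |SAc p q a| + 1) * (2 * SARb p q m n a) * (1 / 2) ^ k := by
    have h1 := SA_Rb_pos (a := a) h
    have h2 : (0:ℝ) ≤ |SAc p q a| := abs_nonneg _
    have h3 : (0:ℝ) < (1/2:ℝ) ^ k := by positivity
    exact mul_nonneg (mul_nonneg (by linarith) (by linarith)) h3.le
  apply pi_norm_le_iff_of_nonneg hnn |>.mpr
  intro i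
  rw [Real.norm_eq_abs]
  exact SA_Bk_bound h k (by have := SA_Rb_pos (a := a) h; linarith) (hbd 0) (hbd 1) i


def SAseps (p sI : ℤ) : ℕ → ℤ
  | 0 => p + sI
  | k + 1 => sI ^ (k + 2) * (1 - sI * p)

lemma SA_absI {sI : ℤ} (hs : sI = 1 ∨ sI = -1) : |sI| = 1 := by
  rcases hs with rfl | rfl <;> rfl

lemma SA_eps_bound {sI : ℤ} (hs : sI = 1 ∨ sI = -1) (k : ℕ) :
    |SAseps p sI k| ≤ |p| + 1 := by
  cases k with
  | zero =>
    show |p + sI| ≤ |p| + 1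
    calc |p + sI| ≤ |p| + |sI| := abs_add_le _ _
      _ = |p| + 1 := by rw [SA_absI hs]
  | succ k =>
    show |sI ^ (k + 2) * (1 - sI * p)| ≤ |p| + 1
    rw [abs_mul, abs_pow, SA_absI hs, one_pow, one_mul]
    calc |1 - sI * p| ≤ |(1:ℤ)| + |sI * p| := abs_sub _ _
      _ = 1 + |p| := by rw [abs_mul, SA_absI hs, one_mul, abs_one]
      _ = |p| + 1 := by ring

lemma SA_Pm1_ne (h : SAhyp p q m n) : (p:ℝ) - 1 ≠ 0 := by
  have h4 := SA_absP h
  rcases abs_cases ((p:ℝ)) with ⟨he, _⟩ | ⟨he, _⟩ <;> intro h0 <;> rw [he] at h4 <;> linarith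

lemma SA_Pp1_ne (h : SAhyp p q m n) : (p:ℝ) + 1 ≠ 0 := by
  have h4 := SA_absP h
  rcases abs_cases ((p:ℝ)) with ⟨he, _⟩ | ⟨he, _⟩ <;> intro h0 <;> rw [he] at h4 <;> linarith

lemma SA_one_sub_iP_ne (h : SAhyp p q m n) : (1:ℝ) - ((p:ℝ))⁻¹ ≠ 0 := by
  have := SA_iP_le h
  have h1 : ((p:ℝ))⁻¹ ≤ 1/4 := le_of_abs_le this
  intro h0
  linarith

lemma SA_one_add_iP_ne (h : SAhyp p q m n) : (1:ℝ) + ((p:ℝ))⁻¹ ≠ 0 := by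
  have := SA_iP_le h
  have h1 : -(1/4 : ℝ) ≤ ((p:ℝ))⁻¹ := neg_le_of_abs_le this
  intro h0
  linarith

/-- The magic sequence represents `1` in base `p`. -/
lemma SA_eps_P (h : SAhyp p q m n) {sI : ℤ} (hs : sI = 1 ∨ sI = -1) :
    HasSum (fun k => ((p:ℝ))⁻¹ ^ (k + 1) * ((SAseps p sI k : ℤ) : ℝ)) 1 := by
  have hP := SA_P_ne h
  have hiP := SA_iP_le h
  apply SA_hasSum_shift
  rcases hs with rfl | rfl
  · have hfun : (fun k => ((p:ℝ))⁻¹ ^ (k + 1 + 1) * ((SAseps p 1 (k + 1) : ℤ) : ℝ))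
        = fun k => ((1 - (p:ℝ)) * ((p:ℝ))⁻¹ ^ 2) * ((p:ℝ))⁻¹ ^ k := by
      funext k
      show ((p:ℝ))⁻¹ ^ (k + 2) * (((1:ℤ) ^ (k + 2) * (1 - 1 * p) : ℤ) : ℝ) = _
      push_cast
      ring
    rw [hfun]
    have hgeom := SA_geom ((1 - (p:ℝ)) * ((p:ℝ))⁻¹ ^ 2) ((p:ℝ))⁻¹ (by linarith)
    convert hgeom using 1
    case e'_3 => rfl
    show (1:ℝ) - ((p:ℝ))⁻¹ ^ (0 + 1) * (((p + 1 : ℤ)) : ℝ) = _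
    have hne := SA_one_sub_iP_ne h
    have hne1 := SA_Pm1_ne h
    have hne2 := SA_Pp1_ne h
    push_cast
    field_simp
    ring
  · have hfun : (fun k => ((p:ℝ))⁻¹ ^ (k + 1 + 1) * ((SAseps p (-1) (k + 1) : ℤ) : ℝ))
        = fun k => ((1 + (p:ℝ)) * ((p:ℝ))⁻¹ ^ 2 * (-1) ^ 2) * (-((p:ℝ))⁻¹) ^ k := by
      funext k
      show ((p:ℝ))⁻¹ ^ (k + 2) * ((((-1):ℤ) ^ (k + 2) * (1 - (-1) * p) : ℤ) : ℝ) = _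
      push_cast
      rw [neg_pow ((p:ℝ))⁻¹]
      ring
    rw [hfun]
    have habs : |(-((p:ℝ))⁻¹)| < 1 := by rw [abs_neg]; linarith
    have hgeom := SA_geom ((1 + (p:ℝ)) * ((p:ℝ))⁻¹ ^ 2 * (-1) ^ 2) (-((p:ℝ))⁻¹) habs
    convert hgeom using 1
    case e'_3 => rfl
    show (1:ℝ) - ((p:ℝ))⁻¹ ^ (0 + 1) * (((p + -1 : ℤ)) : ℝ) = _
    have hne := SA_one_add_iP_ne h
    have hne1 := SA_Pm1_ne h
    have hne2 := SA_Pp1_ne h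
    have hne3 : (1:ℝ) + (p:ℝ) ≠ 0 := by rwa [add_comm]
    push_cast
    field_simp
    ring_nf
    rw [← add_one_mul, add_comm (p:ℝ) 1, mul_inv_cancel₀ hne3]

/-- The magic sequence also represents `1` in base `q`. -/
lemma SA_eps_Q (h : SAhyp p q m n) {sI : ℤ} (hq2 : q = 2 * sI) (hs : sI = 1 ∨ sI = -1) :
    HasSum (fun k => ((q:ℝ))⁻¹ ^ (k + 1) * ((SAseps p sI k : ℤ) : ℝ)) 1 := by
  apply SA_hasSum_shift
  rcases hs with rfl | rfl
  · have hqR : ((q:ℤ):ℝ) = 2 := by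
      have h2 : q = 2 := by omega
      rw [h2]; norm_num
    simp only [hqR]
    have hfun : (fun k => ((2:ℝ))⁻¹ ^ (k + 1 + 1) * ((SAseps p 1 (k + 1) : ℤ) : ℝ))
        = fun k => ((1 - (p:ℝ)) * ((2:ℝ))⁻¹ ^ 2) * ((2:ℝ))⁻¹ ^ k := by
      funext k
      show ((2:ℝ))⁻¹ ^ (k + 2) * (((1:ℤ) ^ (k + 2) * (1 - 1 * p) : ℤ) : ℝ) = _
      push_cast
      ring
    rw [hfun]
    have hgeom := SA_geom ((1 - (p:ℝ)) * ((2:ℝ))⁻¹ ^ 2) ((2:ℝ))⁻¹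
      (by rw [abs_of_pos] <;> norm_num)
    convert hgeom using 1
    case e'_3 => rfl
    show (1:ℝ) - ((2:ℝ))⁻¹ ^ (0 + 1) * (((p + 1 : ℤ)) : ℝ) = _
    push_cast
    norm_num
    ring
  · have hqR : ((q:ℤ):ℝ) = -2 := by
      have h2 : q = -2 := by omega
      rw [h2]; norm_num
    simp only [hqR]
    have hfun : (fun k => ((-2:ℝ))⁻¹ ^ (k + 1 + 1) * ((SAseps p (-1) (k + 1) : ℤ) : ℝ))
        = fun k => ((1 + (p:ℝ)) * ((2:ℝ))⁻¹ ^ 2) * ((2:ℝ))⁻¹ ^ k := by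
      funext k
      show ((-2:ℝ))⁻¹ ^ (k + 2) * ((((-1):ℤ) ^ (k + 2) * (1 - (-1) * p) : ℤ) : ℝ) = _
      push_cast
      rw [show ((-2:ℝ))⁻¹ = -((2:ℝ))⁻¹ by norm_num, neg_pow (((2:ℝ))⁻¹)]
      have hneg1 : ((-1:ℝ)) ^ (k + 2) * ((-1:ℝ)) ^ (k + 2) = 1 := by
        rw [← mul_pow]; norm_num
      linear_combination ((2:ℝ)⁻¹ ^ (k + 2) * (1 + (p:ℝ))) * hneg1
    rw [hfun]
    have hgeom := SA_geom ((1 + (p:ℝ)) * ((2:ℝ))⁻¹ ^ 2) ((2:ℝ))⁻¹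
      (by rw [abs_of_pos] <;> norm_num)
    convert hgeom using 1
    case e'_3 => rfl
    show (1:ℝ) - ((-2:ℝ))⁻¹ ^ (0 + 1) * (((p + -1 : ℤ)) : ℝ) = _
    push_cast
    norm_num
    ring

/-- Base-`q` representation of an integer `Δj` with digits `Δj * sI^(k+1)`. -/
lemma SA_delta_Q (h : SAhyp p q m n) {sI : ℤ} (hq2 : q = 2 * sI) (hs : sI = 1 ∨ sI = -1)
    (Δj : ℤ) :
    HasSum (fun k => ((q:ℝ))⁻¹ ^ (k + 1) * ((Δj * sI ^ (k + 1) : ℤ) : ℝ)) (Δj : ℝ) := by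
  rcases hs with rfl | rfl
  · have hqR : ((q:ℤ):ℝ) = 2 := by
      have h2 : q = 2 := by omega
      rw [h2]; norm_num
    simp only [hqR]
    have hfun : (fun k => ((2:ℝ))⁻¹ ^ (k + 1) * ((Δj * 1 ^ (k + 1) : ℤ) : ℝ))
        = fun k => (Δj:ℝ) * ((1:ℝ)/2) ^ (k + 1) := by
      funext k
      push_cast
      norm_num
      ring
    rw [hfun]
    have := SA_half.mul_left (Δj:ℝ)
    simpa using this
  · have hqR : ((q:ℤ):ℝ) = -2 := by
      have h2 : q = -2 := by omega
      rw [h2]; norm_num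
    simp only [hqR]
    have hfun : (fun k => ((-2:ℝ))⁻¹ ^ (k + 1) * ((Δj * (-1) ^ (k + 1) : ℤ) : ℝ))
        = fun k => (Δj:ℝ) * ((1:ℝ)/2) ^ (k + 1) := by
      funext k
      push_cast
      rw [show ((-2:ℝ))⁻¹ = -((2:ℝ))⁻¹ by norm_num, neg_pow (((2:ℝ))⁻¹)]
      have hneg1 : ((-1:ℝ)) ^ (k + 1) * ((-1:ℝ)) ^ (k + 1) = 1 := by
        rw [← mul_pow]; norm_num
      linear_combination ((2:ℝ)⁻¹ ^ (k + 1) * (Δj:ℝ)) * hneg1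
    rw [hfun]
    have := SA_half.mul_left (Δj:ℝ)
    simpa using this

lemma SA_max_sub (b : ℤ) : max b 0 - max (-b) 0 = b := by
  rcases le_total 0 b with hb | hb
  · rw [max_eq_left hb, max_eq_right (by omega : -b ≤ 0)]; ring
  · rw [max_eq_right hb, max_eq_left (by omega : (0:ℤ) ≤ -b)]; ring

/-- Realization of digit differences `(Δi, Δj)` with `Δi ∈ {0,1}` as differences of
points of `T`. -/
lemma SA_linked (h : SAhyp p q m n) {sI : ℤ} (hq2 : q = 2 * sI) (hs : sI = 1 ∨ sI = -1)
    (Δi Δj : ℤ) (hΔi : Δi = 0 ∨ Δi = 1) (hΔj1 : -(n - 1) ≤ Δj) (hΔj2 : Δj ≤ n - 1) :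
    ∃ z z', z ∈ SAT p q m n a ∧ z' ∈ SAT p q m n a ∧
      z - z' = ![(Δi : ℝ), (Δj : ℝ)] := by
  set ε : ℕ → ℤ := fun k => Δi * SAseps p sI k with hε
  set δ : ℕ → ℤ := fun k => Δj * sI ^ (k + 1) with hδ
  have hp0 : (0:ℤ) ≤ |p| := abs_nonneg p
  have hm2 : |p| + 2 ≤ m := h.2.2.1
  have hn2 : (2:ℤ) ≤ n := h.2.2.2
  have hεb : ∀ k, |ε k| ≤ m - 1 := by
    intro k
    have h1 := SA_eps_bound (p := p) hs k
    rw [hε]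
    rcases hΔi with rfl | rfl
    · simp only [zero_mul, abs_zero]; omega
    · simp only [one_mul]; omega
  have hδb : ∀ k, |δ k| ≤ n - 1 := by
    intro k
    rw [hδ, abs_mul, abs_pow, SA_absI hs, one_pow, mul_one]
    rw [abs_le]
    exact ⟨hΔj1, hΔj2⟩
  have hbI : ∀ k, 0 ≤ max (ε k) 0 ∧ max (ε k) 0 ≤ m - 1 := by
    intro k; have := hεb k; rw [abs_le] at this
    exact ⟨le_max_right _ _, max_le this.2 (by omega)⟩
  have hbI' : ∀ k, 0 ≤ max (-ε k) 0 ∧ max (-ε k) 0 ≤ m - 1 := by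
    intro k; have := hεb k; rw [abs_le] at this
    exact ⟨le_max_right _ _, max_le (by omega) (by omega)⟩
  have hbJ : ∀ k, 0 ≤ max (δ k) 0 ∧ max (δ k) 0 ≤ n - 1 := by
    intro k; have := hδb k; rw [abs_le] at this
    exact ⟨le_max_right _ _, max_le this.2 (by omega)⟩
  have hbJ' : ∀ k, 0 ≤ max (-δ k) 0 ∧ max (-δ k) 0 ≤ n - 1 := by
    intro k; have := hδb k; rw [abs_le] at this
    exact ⟨le_max_right _ _, max_le (by omega) (by omega)⟩
  obtain ⟨z, hzT, hz⟩ := SA_mem (a := a) h (fun k => max (ε k) 0) (fun k => max (δ k) 0) hbI hbJ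
  obtain ⟨z', hz'T, hz'⟩ := SA_mem (a := a) h (fun k => max (-ε k) 0) (fun k => max (-δ k) 0)
    hbI' hbJ' 
  refine ⟨z, z', hzT, hz'T, ?_⟩
  have hsub := hz.sub hz'
  have hIe : ∀ k, ((max (ε k) 0 : ℤ) : ℝ) - ((max (-ε k) 0 : ℤ) : ℝ) = ((ε k : ℤ) : ℝ) := by
    intro k
    have := SA_max_sub (ε k)
    exact_mod_cast congrArg (fun t : ℤ => (t : ℝ)) this
  have hJe : ∀ k, ((max (δ k) 0 : ℤ) : ℝ) - ((max (-δ k) 0 : ℤ) : ℝ) = ((δ k : ℤ) : ℝ) := by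
    intro k
    have := SA_max_sub (δ k)
    exact_mod_cast congrArg (fun t : ℤ => (t : ℝ)) this
  have hfun : (fun k => (SAB p q a (k + 1)).mulVec ![((max (ε k) 0 : ℤ) : ℝ), ((max (δ k) 0 : ℤ) : ℝ)]
      - (SAB p q a (k + 1)).mulVec ![((max (-ε k) 0 : ℤ) : ℝ), ((max (-δ k) 0 : ℤ) : ℝ)])
      = fun k => ![((p:ℝ))⁻¹ ^ (k + 1) * ((ε k : ℤ) : ℝ),
          SAc p q a * (((p:ℝ))⁻¹ ^ (k + 1) - ((q:ℝ))⁻¹ ^ (k + 1)) * ((ε k : ℤ) : ℝ)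
            + ((q:ℝ))⁻¹ ^ (k + 1) * ((δ k : ℤ) : ℝ)] := by
    funext k
    rw [SAB, SA_mulVec22, SA_mulVec22]
    funext i
    fin_cases i
    · simp
      have h1 := hIe k
      push_cast at h1 ⊢
      linear_combination (((p:ℝ))⁻¹ * ((p:ℝ))⁻¹ ^ k) * h1
    · simp
      have h1 := hIe k
      have h2 := hJe k
      push_cast at h1 h2 ⊢
      linear_combination (SAc p q a * (((p:ℝ))⁻¹ * ((p:ℝ))⁻¹ ^ k - ((q:ℝ))⁻¹ * ((q:ℝ))⁻¹ ^ k)) * h1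
        + (((q:ℝ))⁻¹ * ((q:ℝ))⁻¹ ^ k) * h2
  rw [hfun] at hsub
  have hpair : ∀ {f g : ℕ → ℝ} {A B : ℝ}, HasSum f A → HasSum g B →
      HasSum (fun k => (![f k, g k] : Fin 2 → ℝ)) ![A, B] := by
    intro f g A B hf hg
    apply Pi.hasSum.mpr
    intro i
    fin_cases i
    · simpa using hf
    · simpa using hg
  have hA' : HasSum (fun k => ((p:ℝ))⁻¹ ^ (k + 1) * ((ε k : ℤ) : ℝ)) ((Δi:ℝ)) := by
    have hA := (SA_eps_P h hs).mul_left (Δi : ℝ)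
    have hfun0 : (fun k => ((p:ℝ))⁻¹ ^ (k + 1) * ((ε k : ℤ) : ℝ))
        = fun k => (Δi:ℝ) * (((p:ℝ))⁻¹ ^ (k + 1) * ((SAseps p sI k : ℤ) : ℝ)) := by
      funext k; simp only [hε]; push_cast; ring
    rw [hfun0]
    simpa using hA
  have hB' : HasSum (fun k => SAc p q a * (((p:ℝ))⁻¹ ^ (k + 1) - ((q:ℝ))⁻¹ ^ (k + 1)) * ((ε k : ℤ) : ℝ)
      + ((q:ℝ))⁻¹ ^ (k + 1) * ((δ k : ℤ) : ℝ)) ((Δj:ℝ)) := by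
    have hA := ((SA_eps_P h hs).mul_left ((Δi:ℝ) * SAc p q a)).sub
      ((SA_eps_Q h hq2 hs).mul_left ((Δi:ℝ) * SAc p q a))
    have hB := SA_delta_Q h hq2 hs Δj
    have hAB := hA.add hB
    have hfun1 : (fun k => SAc p q a * (((p:ℝ))⁻¹ ^ (k + 1) - ((q:ℝ))⁻¹ ^ (k + 1)) * ((ε k : ℤ) : ℝ)
        + ((q:ℝ))⁻¹ ^ (k + 1) * ((δ k : ℤ) : ℝ))
        = fun k => ((Δi:ℝ) * SAc p q a * (((p:ℝ))⁻¹ ^ (k + 1) * ((SAseps p sI k : ℤ) : ℝ))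
            - (Δi:ℝ) * SAc p q a * (((q:ℝ))⁻¹ ^ (k + 1) * ((SAseps p sI k : ℤ) : ℝ)))
            + ((q:ℝ))⁻¹ ^ (k + 1) * ((Δj * sI ^ (k + 1) : ℤ) : ℝ) := by
      funext k; simp only [hε, hδ]; push_cast; ring
    rw [hfun1]
    convert hAB using 1
    case e'_3 => rfl
    ring
  have htarget := hpair hA' hB'
  exact hsub.unique htarget


def SAdig (i j : ℤ) : Fin 2 → ℝ := ![(i : ℝ), (j : ℝ)]

lemma SA_dig_mem {i j : ℤ} (h1 : 0 ≤ i) (h2 : i ≤ m - 1) (h3 : 0 ≤ j) (h4 : j ≤ n - 1) :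
    SAdig i j ∈ digitSet m n := ⟨i, j, h1, h2, h3, h4, rfl⟩

lemma SA_dig_diff (i j i' j' : ℤ) :
    SAdig i' j' - SAdig i j = ![((i' - i : ℤ) : ℝ), ((j' - j : ℤ) : ℝ)] := by
  funext l
  fin_cases l <;> simp [SAdig] <;> push_cast <;> ring

lemma SA_R_symm {k : ℕ} {x y : Fin 2 → ℝ} (h : SAR p q m n a k x y) : SAR p q m n a k y x := by
  obtain ⟨hx, hy, w, u, v, hw, hu, hv, hxe, hye⟩ := h
  exact ⟨hy, hx, w, v, u, hw, hv, hu, hye, hxe⟩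

lemma SA_RTG_symm {k : ℕ} {x y : Fin 2 → ℝ}
    (h : Relation.ReflTransGen (SAR p q m n a k) x y) :
    Relation.ReflTransGen (SAR p q m n a k) y x := by
  induction h with
  | refl => exact Relation.ReflTransGen.refl
  | tail hxb hbc ih =>
    exact Relation.ReflTransGen.trans (Relation.ReflTransGen.single (SA_R_symm hbc)) ih

/-- One step between adjacent pieces. -/
lemma SA_step (h : SAhyp p q m n) {sI : ℤ} (hq2 : q = 2 * sI) (hs : sI = 1 ∨ sI = -1)
    {i j i' j' : ℤ} (hb1 : 0 ≤ i) (hb2 : i ≤ m - 1) (hb3 : 0 ≤ j) (hb4 : j ≤ n - 1)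
    (hb5 : 0 ≤ i') (hb6 : i' ≤ m - 1) (hb7 : 0 ≤ j') (hb8 : j' ≤ n - 1)
    (hdiff : i' - i = 0 ∨ i' - i = 1) {x : Fin 2 → ℝ}
    (hx : ∃ x' ∈ SAT p q m n a, x = SAfpt p q a (SAdig i j) x') :
    ∃ y, (∃ y' ∈ SAT p q m n a, y = SAfpt p q a (SAdig i' j') y') ∧
      Relation.ReflTransGen (SAR p q m n a 1) x y := by
  obtain ⟨xh, hxhT, hxe⟩ := hx
  obtain ⟨z, z', hzT, hz'T, hzz'⟩ := SA_linked (a := a) h hq2 hs (i' - i) (j' - j) hdiff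
    (by omega) (by omega)
  have hzd : z - z' = SAdig i' j' - SAdig i j := by
    rw [SA_dig_diff]
    exact hzz'
  have harg : z + SAdig i j = z' + SAdig i' j' := by
    have h0 : z + SAdig i j - (z' + SAdig i' j') = 0 := by
      rw [show z + SAdig i j - (z' + SAdig i' j') = z - z' - (SAdig i' j' - SAdig i j) by abel,
        hzd]
      abel
    exact sub_eq_zero.mp h0
  have hcommon : SAfpt p q a (SAdig i j) z = SAfpt p q a (SAdig i' j') z' := by
    rw [SAfpt, SAfpt, harg]
  have hdijT : SAdig i j ∈ digitSet m n := SA_dig_mem hb1 hb2 hb3 hb4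
  refine ⟨SAfpt p q a (SAdig i j) z, ⟨z', hz'T, hcommon⟩, Relation.ReflTransGen.single ?_⟩
  exact ⟨by rw [hxe]; exact SA_fpt_mem h hdijT hxhT, SA_fpt_mem h hdijT hzT,
    fun _ => SAdig i j, xh, z, fun l hl => hdijT, hxhT, hzT, hxe, rfl⟩

/-- Walking from piece `(i,j)` to `(i',j')` when `i ≤ i'`. -/
lemma SA_walk (h : SAhyp p q m n) {sI : ℤ} (hq2 : q = 2 * sI) (hs : sI = 1 ∨ sI = -1) :
    ∀ (t : ℕ) (i j i' j' : ℤ), 0 ≤ i → i ≤ m - 1 → 0 ≤ j → j ≤ n - 1 →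
      0 ≤ i' → i' ≤ m - 1 → 0 ≤ j' → j' ≤ n - 1 → (i' - i).natAbs = t → i ≤ i' →
      ∀ x, (∃ x' ∈ SAT p q m n a, x = SAfpt p q a (SAdig i j) x') →
      ∃ y, (∃ y' ∈ SAT p q m n a, y = SAfpt p q a (SAdig i' j') y') ∧
        Relation.ReflTransGen (SAR p q m n a 1) x y := by
  intro t
  induction t with
  | zero =>
    intro i j i' j' hb1 hb2 hb3 hb4 hb5 hb6 hb7 hb8 ht hle x hx
    have : i' = i := by omega
    subst this
    exact SA_step h hq2 hs hb1 hb2 hb3 hb4 hb5 hb6 hb7 hb8 (by omega) hx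
  | succ t ih =>
    intro i j i' j' hb1 hb2 hb3 hb4 hb5 hb6 hb7 hb8 ht hle x hx
    have hlt : i < i' := by omega
    obtain ⟨y₁, hy₁, hR1⟩ := SA_step h hq2 hs hb1 hb2 hb3 hb4
      (by omega : (0:ℤ) ≤ i + 1) (by omega : i + 1 ≤ m - 1) hb3 hb4
      (by omega : i + 1 - i = 0 ∨ i + 1 - i = 1) ⟨_, hx.choose_spec.1, hx.choose_spec.2⟩
    obtain ⟨y₂, hy₂, hR2⟩ := ih (i + 1) j i' j' (by omega) (by omega) hb3 hb4
      hb5 hb6 hb7 hb8 (by omega) (by omega) y₁ hy₁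
    exact ⟨y₂, hy₂, hR1.trans hR2⟩

/-- Any two points of `T` are connected by level-1 chains. -/
lemma SA_level1 (h : SAhyp p q m n) {sI : ℤ} (hq2 : q = 2 * sI) (hs : sI = 1 ∨ sI = -1)
    {u v : Fin 2 → ℝ} (hu : u ∈ SAT p q m n a) (hv : v ∈ SAT p q m n a) :
    Relation.ReflTransGen (SAR p q m n a 1) u v := by
  -- a join lemma for ordered `i ≤ i'`
  have join : ∀ (i j i' j' : ℤ), 0 ≤ i → i ≤ m - 1 → 0 ≤ j → j ≤ n - 1 →
      0 ≤ i' → i' ≤ m - 1 → 0 ≤ j' → j' ≤ n - 1 → i ≤ i' →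
      ∀ x y, (∃ x' ∈ SAT p q m n a, x = SAfpt p q a (SAdig i j) x') →
        (∃ y' ∈ SAT p q m n a, y = SAfpt p q a (SAdig i' j') y') →
        Relation.ReflTransGen (SAR p q m n a 1) x y := by
    intro i j i' j' hb1 hb2 hb3 hb4 hb5 hb6 hb7 hb8 hle x y hx hy
    obtain ⟨y₀, ⟨y₀', hy₀'T, hy₀e⟩, hR⟩ := SA_walk h hq2 hs (i' - i).natAbs i j i' j'
      hb1 hb2 hb3 hb4 hb5 hb6 hb7 hb8 rfl hle x hx
    obtain ⟨yh, hyhT, hye⟩ := hy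
    have hdT : SAdig i' j' ∈ digitSet m n := SA_dig_mem hb5 hb6 hb7 hb8
    refine hR.trans (Relation.ReflTransGen.single ?_)
    exact ⟨by rw [hy₀e]; exact SA_fpt_mem h hdT hy₀'T, by rw [hye]; exact SA_fpt_mem h hdT hyhT,
      fun _ => SAdig i' j', y₀', yh, fun l hl => hdT, hy₀'T, hyhT, hy₀e, hye⟩
  obtain ⟨d, hd, uh, huhT, hue⟩ := SA_exists_fpt h hu
  obtain ⟨e, he, vh, hvhT, hve⟩ := SA_exists_fpt h hv
  obtain ⟨i, j, hb1, hb2, hb3, hb4, rfl⟩ := hd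
  obtain ⟨i', j', hb5, hb6, hb7, hb8, rfl⟩ := he
  rcases le_total i i' with hle | hle
  · exact join i j i' j' hb1 hb2 hb3 hb4 hb5 hb6 hb7 hb8 hle u v
      ⟨uh, huhT, hue⟩ ⟨vh, hvhT, hve⟩
  · exact SA_RTG_symm (join i' j' i j hb5 hb6 hb7 hb8 hb1 hb2 hb3 hb4 hle v u
      ⟨vh, hvhT, hve⟩ ⟨uh, huhT, hue⟩)

/-- Refining a level-`k` step into a level-`(k+1)` chain. -/
lemma SA_refine (h : SAhyp p q m n) {sI : ℤ} (hq2 : q = 2 * sI) (hs : sI = 1 ∨ sI = -1)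
    {k : ℕ} {x y : Fin 2 → ℝ} (hR : SAR p q m n a k x y) :
    Relation.ReflTransGen (SAR p q m n a (k + 1)) x y := by
  obtain ⟨hx, hy, w, u, v, hw, hu, hv, hxe, hye⟩ := hR
  have h1 : Relation.ReflTransGen (SAR p q m n a 1) u v := SA_level1 h hq2 hs hu hv
  have hmap : ∀ e e', Relation.ReflTransGen (SAR p q m n a 1) e e' →
      Relation.ReflTransGen (SAR p q m n a (k + 1)) (SAg p q a k w e) (SAg p q a k w e') := by
    intro e e' hR1
    induction hR1 with
    | refl => exact Relation.ReflTransGen.refl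
    | tail hxb hbc ih =>
      refine ih.trans (Relation.ReflTransGen.single ?_)
      obtain ⟨hbT, hcT, w₁, ub, vb, hw₁, hub, hvb, hbe, hce⟩ := hbc
      have hw0 : w₁ 0 ∈ digitSet m n := hw₁ 0 (by omega)
      set w' : ℕ → Fin 2 → ℝ := fun l => if l < k then w l else w₁ 0 with hw'
      have hw'k : w' k = w₁ 0 := by rw [hw']; simp
      have hw'mem : ∀ l, l < k + 1 → w' l ∈ digitSet m n := by
        intro l hl
        rw [hw']
        by_cases hlk : l < k
        · simp only [if_pos hlk]; exact hw l hlk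
        · simp only [if_neg hlk]; exact hw0
      have hcongr : ∀ z, SAg p q a (k + 1) w' z = SAg p q a k w (SAfpt p q a (w₁ 0) z) := by
        intro z
        show SAg p q a k w' (SAfpt p q a (w' k) z) = _
        rw [hw'k]
        exact SA_g_congr k w' w _ fun l hl => by rw [hw']; simp [hl]
      refine ⟨SA_g_mem h k w _ hw (by rw [hbe] at hbT ⊢; exact hbT),
        SA_g_mem h k w _ hw (by rw [hce] at hcT ⊢; exact hcT),
        w', ub, vb, hw'mem, hub, hvb, ?_, ?_⟩
      · rw [hbe, hcongr]
        rfl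
      · rw [hce, hcongr]
        rfl
  rw [hxe, hye]
  exact hmap u v h1

/-- Level-`k` chains between arbitrary points of `T`. -/
lemma SA_chain (h : SAhyp p q m n) {sI : ℤ} (hq2 : q = 2 * sI) (hs : sI = 1 ∨ sI = -1)
    (k : ℕ) {x y : Fin 2 → ℝ} (hx : x ∈ SAT p q m n a) (hy : y ∈ SAT p q m n a) :
    Relation.ReflTransGen (SAR p q m n a k) x y := by
  induction k with
  | zero => exact Relation.ReflTransGen.single (SA_R_zero hx hy)
  | succ k ih =>
    have hlift : ∀ {x' y' : Fin 2 → ℝ}, Relation.ReflTransGen (SAR p q m n a k) x' y' →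
        Relation.ReflTransGen (SAR p q m n a (k + 1)) x' y' := by
      intro x' y' hR
      induction hR with
      | refl => exact Relation.ReflTransGen.refl
      | tail hxb hbc ih2 => exact ih2.trans (SA_refine h hq2 hs hbc)
    exact hlift ih

end SA

theorem stmt_0 (p q m n : ℤ) (a : ℝ) (hp : 2 ≤ |p|) (hq : |q| = 2)
    (hm1 : |p| + 1 < m) (hm2 : m < 2 * |p| - 1) (hn : |q| ≤ 2 * n - 1) :
    IsConnected (selfAffineSet (matA p q a) (digitSet m n)) := by
  have hm1' : |p| + 2 ≤ m := by omega
  have hm2' : m + 1 ≤ 2 * |p| - 1 := by omega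
  have h4 : 4 ≤ |p| := by omega
  have hq2 : q = 2 ∨ q = -2 := (abs_eq (by norm_num : (0:ℤ) ≤ 2)).mp hq
  have hn2 : 2 ≤ n := by rw [hq] at hn; omega
  have hSA : SAhyp p q m n := ⟨h4, hq2, hm1', hn2⟩
  have hm6 : 6 ≤ m := by linarith
  obtain ⟨sI, hq2s, hs⟩ : ∃ sI : ℤ, q = 2 * sI ∧ (sI = 1 ∨ sI = -1) := by
    rcases hq2 with rfl | rfl
    · exact ⟨1, rfl, Or.inl rfl⟩
    · exact ⟨-1, by norm_num, Or.inr rfl⟩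
  have hz01 : ∀ _ : ℕ, (0:ℤ) ≤ 0 ∧ (0:ℤ) ≤ m - 1 := fun _ => ⟨le_refl 0, by omega⟩
  have hz02 : ∀ _ : ℕ, (0:ℤ) ≤ 0 ∧ (0:ℤ) ≤ n - 1 := fun _ => ⟨le_refl 0, by omega⟩
  obtain ⟨x₀, hx₀T, -⟩ := SA_mem (a := a) hSA (fun _ => 0) (fun _ => 0) hz01 hz02
  refine ⟨⟨x₀, hx₀T⟩, ?_⟩
  intro U V hU hV hUV ⟨xu, hxuT, hxuU⟩ ⟨xv, hxvT, hxvV⟩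
  by_contra hempty
  rw [Set.not_nonempty_iff_eq_empty] at hempty
  have hTc : IsCompact (SAT p q m n a) := SA_T_isCompact hSA
  set Ku : Set (Fin 2 → ℝ) := SAT p q m n a ∩ Vᶜ with hKu
  set Kv : Set (Fin 2 → ℝ) := SAT p q m n a ∩ Uᶜ with hKv
  have hnotUV : ∀ z, z ∈ SAT p q m n a → z ∈ U → z ∉ V := by
    intro z h1 h2 h3
    have hz : z ∈ selfAffineSet (matA p q a) (digitSet m n) ∩ (U ∩ V) := ⟨h1, h2, h3⟩
    rw [hempty] at hz
    exact hz
  have hnotVU : ∀ z, z ∈ SAT p q m n a → z ∈ V → z ∉ U := by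
    intro z h1 h2 h3
    have hz : z ∈ selfAffineSet (matA p q a) (digitSet m n) ∩ (U ∩ V) := ⟨h1, h3, h2⟩
    rw [hempty] at hz
    exact hz
  have hxuKu : xu ∈ Ku := ⟨hxuT, hnotUV xu hxuT hxuU⟩
  have hxvKv : xv ∈ Kv := ⟨hxvT, hnotVU xv hxvT hxvV⟩
  have hKuc : IsCompact Ku := hTc.inter_right hV.isClosed_compl
  have hKvc : IsCompact Kv := hTc.inter_right hU.isClosed_compl
  have hKvne : Kv.Nonempty := ⟨xv, hxvKv⟩
  have hKvcl : IsClosed Kv := hKvc.isClosed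
  have hdisj : ∀ z, z ∈ Ku → z ∉ Kv := by
    intro z h1 h2
    rcases hUV h1.1 with hu | hv
    · exact h2.2 hu
    · exact h1.2 hv
  have hTKv : ∀ z, z ∈ SAT p q m n a → z ∉ Ku → z ∈ Kv := by
    intro z h1 h2
    have hzV : z ∈ V := by
      by_contra h3
      exact h2 ⟨h1, h3⟩
    exact ⟨h1, hnotVU z h1 hzV⟩
  obtain ⟨a₀, ha₀, hmin⟩ := hKuc.exists_isMinOn ⟨xu, hxuKu⟩
    ((Metric.continuous_infDist_pt Kv).continuousOn)
  have hεpos : 0 < Metric.infDist a₀ Kv := by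
    rw [← hKvcl.notMem_iff_infDist_pos hKvne]
    exact hdisj a₀ ha₀
  set ε := Metric.infDist a₀ Kv with hε
  set Cd := (2 * |SAc p q a| + 1) * (2 * SARb p q m n a) with hCddef
  have hCd : 0 < Cd := by
    have h1 := SA_Rb_pos (a := a) hSA
    have h2 : (0:ℝ) ≤ |SAc p q a| := abs_nonneg _
    rw [hCddef]
    nlinarith
  obtain ⟨k, hk⟩ := exists_pow_lt_of_lt_one (div_pos hεpos hCd) (by norm_num : (1/2 : ℝ) < 1)
  have hklt : Cd * (1/2) ^ k < ε := by
    have h' := (lt_div_iff₀ hCd).mp hk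
    rw [mul_comm Cd ((1/2 : ℝ) ^ k)]
    exact h'
  have hchain := SA_chain (a := a) hSA hq2s hs k hxuT hxvT
  have cross : ∀ y', Relation.ReflTransGen (SAR p q m n a k) xu y' → y' ∈ Kv →
      ∃ b c, SAR p q m n a k b c ∧ b ∈ Ku ∧ c ∈ Kv := by
    intro y' hR
    induction hR with
    | refl => exact fun hy' => absurd hy' (hdisj xu hxuKu)
    | @tail b c hxb hbc ih =>
      intro hc
      by_cases hb : b ∈ Ku
      · exact ⟨b, c, hbc, hb, hc⟩
      · exact ih (hTKv b hbc.1 hb)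
  obtain ⟨b, c, hbc, hbKu, hcKv⟩ := cross xv hchain hxvKv
  have hd1 : dist b c ≤ Cd * (1/2) ^ k := SA_R_dist hSA hbc
  have hd2 : ε ≤ dist b c := by
    calc ε ≤ Metric.infDist b Kv := isMinOn_iff.mp hmin b hbKu
      _ ≤ dist b c := Metric.infDist_le_dist_of_mem hcKv
  linarith
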